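/- Let κ = sup_{N₁(x)=1} N₂(x) < 1, Ω₁ a subset of the N₁-unit sphere, and ρ : Ω₁ → (0,∞) a bounded function such that for every x₀ ∈ Ω₁ there exist m with N₂(m)=1 and b > 0 with ρ(x) ≤ b/(1 − x·p₂(m)) for all x ∈ Ω₁ with equality at x₀. Then ρ is Lipschitz continuous on Ω₁ with a Lipschitz constant depending only on sup ρ, κ, and sup_{N₂(m)=1} |p₂(m)|. -/

import Mathlib

open RealInnerProductSpace

/-- With `κ = sup_{N₁(x)=1} N₂(x) < 1`: if `ρ : Ω₁ → (0,∞)` is bounded by `M`, the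
gradients `p₂(m)` are bounded by `Pb`, and at every `x₀ ∈ Ω₁` the graph of `ρ` is
supported by some `S_I(m,b)`, then `ρ` is Lipschitz on `Ω₁` with constant
`M·Pb/(1−κ)` (depending only on `sup ρ`, `κ` and `sup |p₂|`). -/
theorem stmt14 {n : ℕ} (N₁ N₂ : EuclideanSpace ℝ (Fin n) → ℝ)
    (hN₁_add : ∀ x y, N₁ (x + y) ≤ N₁ x + N₁ y)
    (hN₁_smul : ∀ (c : ℝ) x, N₁ (c • x) = |c| * N₁ x)
    (hN₁_pos : ∀ x, x ≠ 0 → 0 < N₁ x)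
    (hN₂_add : ∀ x y, N₂ (x + y) ≤ N₂ x + N₂ y)
    (hN₂_smul : ∀ (c : ℝ) x, N₂ (c • x) = |c| * N₂ x)
    (hN₂_pos : ∀ x, x ≠ 0 → 0 < N₂ x)
    (p₂ : EuclideanSpace ℝ (Fin n) → EuclideanSpace ℝ (Fin n))
    (hp₂ : ∀ x, x ≠ 0 → HasGradientAt N₂ (p₂ x) x)
    (κ : ℝ) (hκ : IsLUB {r : ℝ | ∃ x, N₁ x = 1 ∧ r = N₂ x} κ) (hκ1 : κ < 1)
    (Ω₁ : Set (EuclideanSpace ℝ (Fin n))) (hΩ : Ω₁ ⊆ {x | N₁ x = 1})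
    (ρ : EuclideanSpace ℝ (Fin n) → ℝ) (hρpos : ∀ x ∈ Ω₁, 0 < ρ x)
    (M : ℝ) (hM : ∀ x ∈ Ω₁, ρ x ≤ M)
    (Pb : ℝ) (hPb : ∀ m, N₂ m = 1 → ‖p₂ m‖ ≤ Pb)
    (hsupp : ∀ x₀ ∈ Ω₁, ∃ m b, N₂ m = 1 ∧ 0 < b ∧
      (∀ x ∈ Ω₁, ρ x ≤ b / (1 - ⟪x, p₂ m⟫)) ∧
      ρ x₀ = b / (1 - ⟪x₀, p₂ m⟫)) :
    ∀ x ∈ Ω₁, ∀ y ∈ Ω₁, |ρ x - ρ y| ≤ (M * Pb / (1 - κ)) * ‖x - y‖ := by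
  have hN₂0 : N₂ 0 = 0 := by simpa using hN₂_smul 0 0
  -- key: subgradient inequality ⟪x, p₂ m⟫ ≤ N₂ x for unit m
  have hkey : ∀ m, N₂ m = 1 → ∀ x, ⟪x, p₂ m⟫ ≤ N₂ x := by
    intro m hm x
    have hm0 : m ≠ 0 := by rintro rfl; rw [hN₂0] at hm; norm_num at hm
    have hgrad := (hp₂ m hm0).hasFDerivAt
    have hline : HasDerivAt (fun t : ℝ => m + t • x) x 0 := by
      simpa using ((hasDerivAt_id (0 : ℝ)).smul_const x).const_add m
    have hcomp : HasDerivAt (fun t : ℝ => N₂ (m + t • x)) ⟪p₂ m, x⟫ 0 := by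
      have hgrad' : HasFDerivAt N₂
          (InnerProductSpace.toDual ℝ (EuclideanSpace ℝ (Fin n)) (p₂ m)) (m + (0:ℝ) • x) := by
        simpa using hgrad
      have := hgrad'.comp_hasDerivAt 0 hline
      simpa [InnerProductSpace.toDual_apply_apply, Function.comp_def] using this
    have hslope : Filter.Tendsto (slope (fun t : ℝ => N₂ (m + t • x)) 0)
        (nhdsWithin 0 (Set.Ioi 0)) (nhds ⟪p₂ m, x⟫) :=
      (hasDerivAt_iff_tendsto_slope.mp hcomp).mono_left
        (nhdsWithin_mono _ (fun t ht => ne_of_gt ht))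
    have hlim : ⟪p₂ m, x⟫ ≤ N₂ x := by
      refine le_of_tendsto hslope ?_
      filter_upwards [self_mem_nhdsWithin] with t ht
      have ht0 : (0 : ℝ) < t := ht
      have hsub : N₂ (m + t • x) ≤ 1 + t * N₂ x := by
        calc N₂ (m + t • x) ≤ N₂ m + N₂ (t • x) := hN₂_add m (t • x)
        _ = 1 + t * N₂ x := by rw [hm, hN₂_smul, abs_of_pos ht0]
      have : slope (fun t : ℝ => N₂ (m + t • x)) 0 t
          = (N₂ (m + t • x) - 1) / t := by
        simp [slope_def_field, hm]
      rw [this, div_le_iff₀ ht0]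
      nlinarith
    calc ⟪x, p₂ m⟫ = ⟪p₂ m, x⟫ := real_inner_comm _ _
    _ ≤ N₂ x := hlim
  have hκle : ∀ x ∈ Ω₁, N₂ x ≤ κ := fun x hx => hκ.1 ⟨x, hΩ hx, rfl⟩
  have h1κ : (0 : ℝ) < 1 - κ := by linarith
  -- one-sided estimate
  have hle : ∀ x ∈ Ω₁, ∀ y ∈ Ω₁, ρ x - ρ y ≤ (M * Pb / (1 - κ)) * ‖x - y‖ := by
    intro x hx y hy
    obtain ⟨m, b, hm, hb, hall, heq⟩ := hsupp y hy
    set p := p₂ m with hp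
    have hPb' : ‖p‖ ≤ Pb := hPb m hm
    have hPb0 : (0 : ℝ) ≤ Pb := le_trans (norm_nonneg _) hPb'
    have hM0 : (0 : ℝ) ≤ M := le_trans (hρpos y hy).le (hM y hy)
    have ha : ⟪x, p⟫ ≤ κ := le_trans (hkey m hm x) (hκle x hx)
    have hc : ⟪y, p⟫ ≤ κ := le_trans (hkey m hm y) (hκle y hy)
    set a := ⟪x, p⟫
    set c := ⟪y, p⟫
    have hdx : (0 : ℝ) < 1 - a := by linarith
    have hdy : (0 : ℝ) < 1 - c := by linarith
    have hstep : ρ x - ρ y ≤ b / (1 - a) - b / (1 - c) := by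
      have := hall x hx
      linarith [heq.ge, this]
    have hfact : b / (1 - a) - b / (1 - c) = (b / (1 - c)) * ((a - c) / (1 - a)) := by
      field_simp
      ring
    have hρy : b / (1 - c) = ρ y := heq.symm
    have hac : a - c ≤ Pb * ‖x - y‖ := by
      have : a - c = ⟪x - y, p⟫ := by simp [a, c, inner_sub_left]
      rw [this]
      calc ⟪x - y, p⟫ ≤ ‖x - y‖ * ‖p‖ := real_inner_le_norm _ _
      _ ≤ ‖x - y‖ * Pb := by gcongr
      _ = Pb * ‖x - y‖ := mul_comm _ _
    have hrhs0 : (0 : ℝ) ≤ M * Pb / (1 - κ) * ‖x - y‖ := by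
      apply mul_nonneg (div_nonneg (mul_nonneg hM0 hPb0) h1κ.le) (norm_nonneg _)
    rcases le_or_gt (a - c) 0 with hneg | hpos
    · have : (b / (1 - c)) * ((a - c) / (1 - a)) ≤ 0 :=
        mul_nonpos_of_nonneg_of_nonpos (div_nonneg hb.le hdy.le)
          (div_nonpos_of_nonpos_of_nonneg hneg hdx.le)
      linarith [hstep, hfact ▸ this]
    · have h2 : (a - c) / (1 - a) ≤ (Pb * ‖x - y‖) / (1 - κ) :=
        div_le_div₀ (mul_nonneg hPb0 (norm_nonneg _)) hac h1κ (by linarith)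
      have h3 : (b / (1 - c)) * ((a - c) / (1 - a)) ≤ M * ((Pb * ‖x - y‖) / (1 - κ)) := by
        apply mul_le_mul (hρy ▸ hM y hy) h2 (div_nonneg hpos.le hdx.le) hM0
      have h4 : M * ((Pb * ‖x - y‖) / (1 - κ)) = M * Pb / (1 - κ) * ‖x - y‖ := by ring
      linarith [hstep, hfact ▸ h3]
  intro x hx y hy
  rw [abs_sub_le_iff]
  constructor
  · exact hle x hx y hy
  · have := hle y hy x hx
    rwa [norm_sub_rev] at this
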